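/- Let A be a vector space over a field k of characteristic 0 with bilinear operations ◁, ▷, and equip L := A ⊗ k[t,t⁻¹] with the bilinear operation ∘ determined by (a⊗tⁱ)∘(b⊗tʲ) = i(a▷b)⊗t^{i+j−1} − j(b◁a)⊗t^{i+j−1} for all a,b ∈ A and i,j ∈ ℤ. Then (L,∘) is a pre-Lie algebra if and only if (A,◁,▷) is a pre-Novikov algebra. -/

import Mathlib

open TensorProduct

noncomputable section

variable {k : Type*} [Field k]
section AlgDefs
variable {A : Type*} [AddCommGroup A] [Module k A]

/-- A pre-Lie algebra structure: `(a∘b)∘c − a∘(b∘c) = (b∘a)∘c − b∘(a∘c)`. -/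
def IsPreLie (op : A →ₗ[k] A →ₗ[k] A) : Prop :=
  ∀ a b c : A, op (op a b) c - op a (op b c) = op (op b a) c - op b (op a c)

/-- A Novikov algebra: a pre-Lie algebra with `(a∘b)∘c = (a∘c)∘b`. -/
def IsNovikov (op : A →ₗ[k] A →ₗ[k] A) : Prop :=
  IsPreLie op ∧ ∀ a b c : A, op (op a b) c = op (op a c) b

/-- A pre-Novikov algebra with operations `l = ◁` and `r = ▷`,
writing `a∘b := a◁b + a▷b`. -/
def IsPreNovikov (l r : A →ₗ[k] A →ₗ[k] A) : Prop :=
  (∀ a b c : A, r a (r b c) = r (l a b + r a b) c + r b (r a c) - r (l b a + r b a) c) ∧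
  (∀ a b c : A, r a (l b c) = l (r a b) c + l b (l a c + r a c) - l (l b a) c) ∧
  (∀ a b c : A, r (l a b + r a b) c = l (r a c) b) ∧
  (∀ a b c : A, l (l a b) c = l (l a c) b)

/-- A right Novikov algebra. -/
def IsRightNovikov (d : A →ₗ[k] A →ₗ[k] A) : Prop :=
  (∀ x y z : A, d (d x y) z - d x (d y z) = d (d x z) y - d x (d z y)) ∧
  (∀ x y z : A, d x (d y z) = d y (d x z))

/-- A right Novikov dialgebra with operations `dl = ⊣` and `dr = ⊢`. -/
def IsRightNovikovDialgebra (dl dr : A →ₗ[k] A →ₗ[k] A) : Prop :=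
  (∀ x y z : A, dr x (dr y z) = dr y (dr x z)) ∧
  (∀ x y z : A, dr x (dl y z) = dl y (dl x z)) ∧
  (∀ x y z : A, dr (dr x y - dl x y) z = 0) ∧
  (∀ x y z : A, dl x (dr y z - dl y z) = 0) ∧
  (∀ x y z : A, dr x (dr y z - dl z y) = dr (dr x y) z - dl (dr x z) y) ∧
  (∀ x y z : A, dl x (dr y z - dl z y) = dl (dl x y) z - dl (dl x z) y)

/-- A quadratic right Novikov algebra: a right Novikov algebra with a symmetric
nondegenerate bilinear form satisfying `(x⋄y,z) = −(x, y⋄z + z⋄y)`. -/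
def IsQuadraticRightNovikov (d : A →ₗ[k] A →ₗ[k] A) (bf : A →ₗ[k] A →ₗ[k] k) : Prop :=
  IsRightNovikov d ∧ (∀ x y : A, bf x y = bf y x) ∧
  (∀ x : A, (∀ y : A, bf x y = 0) → x = 0) ∧
  (∀ x y z : A, bf (d x y) z = - bf x (d y z + d z y))

/-- A quadratic pre-Lie algebra: a pre-Lie algebra with a skew-symmetric nondegenerate
bilinear form satisfying `ω(u∘v,w) = −ω(v, u∘w − w∘u)`. -/
def IsQuadraticPreLie (op : A →ₗ[k] A →ₗ[k] A) (w : A →ₗ[k] A →ₗ[k] k) : Prop :=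
  IsPreLie op ∧ (∀ u v : A, w u v = - w v u) ∧
  (∀ u : A, (∀ v : A, w u v = 0) → u = 0) ∧
  (∀ u v x : A, w (op u v) x = - w v (op u x - op x u))

end AlgDefs


section AffineAux

variable {k A : Type*} [Field k] [AddCommGroup A] [Module k A]

/-- The "defect" element arising from the pre-Lie identity on pure tensors. -/
private def Edef (l r : A →ₗ[k] A →ₗ[k] A) (a b c : A) (i j m : ℤ) : A :=
  ((i + j - 1) • (r (i • r a b - j • l b a) c) - m • (l c (i • r a b - j • l b a)))
  - (i • (r a (j • r b c - m • l c b)) - (j + m - 1) • (l (j • r b c - m • l c b) a))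

private def Q1 (l r : A →ₗ[k] A →ₗ[k] A) (a b c : A) : A :=
  r (r a b) c + r (l a b) c - l (r a c) b

private def Q2 (l r : A →ₗ[k] A →ₗ[k] A) (a b c : A) : A :=
  r (r a b) c + r (l a b) c - r (r b a) c - r (l b a) c + r b (r a c) - r a (r b c)

private def Q3 (l r : A →ₗ[k] A →ₗ[k] A) (a b c : A) : A :=
  r a (l c b) - l (r a c) b - l c (l a b) - l c (r a b) + l (l c a) b

private def Q4 (l r : A →ₗ[k] A →ₗ[k] A) (a b c : A) : A :=
  l (l c b) a - l (l c a) b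

private lemma comb (l r : A →ₗ[k] A →ₗ[k] A) (a b c : A) (i j m : ℤ) :
    Edef l r a b c i j m - Edef l r b a c j i m
      = (i * i - i) • Q1 l r a b c - (j * j - j) • Q1 l r b a c
        + (i * j) • Q2 l r a b c + (i * m) • Q3 l r a b c
        - (j * m) • Q3 l r b a c + (m - m * m) • Q4 l r a b c := by
  simp only [Edef, Q1, Q2, Q3, Q4, map_sub, map_add, map_zsmul, LinearMap.sub_apply,
    LinearMap.add_apply, LinearMap.smul_apply]
  module

private lemma zsmul_cancel [CharZero k] {x : A} {n : ℤ} (hn : n ≠ 0) (h : n • x = 0) :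
    x = 0 := by
  have h2 : ((n : ℤ) : k) • x = 0 := by rw [Int.cast_smul_eq_zsmul]; exact h
  rcases smul_eq_zero.mp h2 with h3 | h3
  · exact absurd (by exact_mod_cast h3) hn
  · exact h3

end AffineAux

/-- The operation
`(a⊗tⁱ)∘(b⊗tʲ) = i(a▷b)⊗t^{i+j−1} − j(b◁a)⊗t^{i+j−1}` on `A ⊗ k[t,t⁻¹]` is
pre-Lie if and only if `(A, ◁, ▷)` is a pre-Novikov algebra. -/
theorem affinization_preLie_iff_preNovikov (k A : Type*) [Field k] [CharZero k]
    [AddCommGroup A] [Module k A]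
    (l r : A →ₗ[k] A →ₗ[k] A)
    (op : A ⊗[k] LaurentPolynomial k →ₗ[k]
      A ⊗[k] LaurentPolynomial k →ₗ[k] A ⊗[k] LaurentPolynomial k)
    (hop : ∀ (a b : A) (i j : ℤ),
      op (a ⊗ₜ[k] (LaurentPolynomial.T i : LaurentPolynomial k))
          (b ⊗ₜ[k] (LaurentPolynomial.T j : LaurentPolynomial k))
        = i • (r a b ⊗ₜ[k] (LaurentPolynomial.T (i + j - 1) : LaurentPolynomial k))
          - j • (l b a ⊗ₜ[k] (LaurentPolynomial.T (i + j - 1) : LaurentPolynomial k))) :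
    IsPreLie op ↔ IsPreNovikov l r := by
  classical
  set T : ℤ → LaurentPolynomial k := LaurentPolynomial.T with hT
  -- (n • x) ⊗ₜ t = n • (x ⊗ₜ t) for integer n
  have zsmul_tmul : ∀ (n : ℤ) (x : A) (t : LaurentPolynomial k),
      (n • x) ⊗ₜ[k] t = n • (x ⊗ₜ[k] t) := fun n x t =>
    map_zsmul ((TensorProduct.mk k A (LaurentPolynomial k)).flip t) n x
  have hop' : ∀ (a b : A) (i j : ℤ), op (a ⊗ₜ[k] T i) (b ⊗ₜ[k] T j)
      = (i • r a b - j • l b a) ⊗ₜ[k] T (i + j - 1) := by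
    intro a b i j
    rw [hT, hop, sub_tmul, zsmul_tmul, zsmul_tmul]
  have key : ∀ (a b c : A) (i j m : ℤ),
      op (op (a ⊗ₜ[k] T i) (b ⊗ₜ[k] T j)) (c ⊗ₜ[k] T m)
        - op (a ⊗ₜ[k] T i) (op (b ⊗ₜ[k] T j) (c ⊗ₜ[k] T m))
      = (Edef l r a b c i j m) ⊗ₜ[k] T (i + j + m - 2) := by
    intro a b c i j m
    rw [hop', hop', hop', hop', show i + j - 1 + m - 1 = i + j + m - 2 by ring,
      show i + (j + m - 1) - 1 = i + j + m - 2 by ring, ← sub_tmul]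
    rfl
  -- injectivity of x ↦ x ⊗ₜ T n
  have tinj : ∀ (x y : A) (n : ℤ), x ⊗ₜ[k] T n = y ⊗ₜ[k] T n → x = y := by
    intro x y n h
    have F := (TensorProduct.rid k A).toLinearMap ∘ₗ
      (LinearMap.lTensor A (Finsupp.lapply n ∘ₗ (AddMonoidAlgebra.coeffLinearEquiv k).toLinearMap : LaurentPolynomial k →ₗ[k] k))
    have hF : ∀ z : A, ((TensorProduct.rid k A).toLinearMap ∘ₗ
        (LinearMap.lTensor A (Finsupp.lapply n ∘ₗ (AddMonoidAlgebra.coeffLinearEquiv k).toLinearMap : LaurentPolynomial k →ₗ[k] k)))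
          (z ⊗ₜ[k] T n) = z := by
      intro z
      rw [LinearMap.comp_apply, LinearMap.lTensor_tmul]
      have : (Finsupp.lapply n ∘ₗ (AddMonoidAlgebra.coeffLinearEquiv k).toLinearMap : LaurentPolynomial k →ₗ[k] k) (T n) = 1 := by
        rw [hT, LaurentPolynomial.T]
        show (Finsupp.single n (1:k)) n = 1
        exact Finsupp.single_eq_same
      rw [this]
      simp
    rw [← hF x, ← hF y, h]
  constructor
  · -- pre-Lie → pre-Novikov
    intro h
    have hbase : ∀ (a b c : A) (i j m : ℤ), Edef l r a b c i j m = Edef l r b a c j i m := by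
      intro a b c i j m
      have h1 := h (a ⊗ₜ[k] T i) (b ⊗ₜ[k] T j) (c ⊗ₜ[k] T m)
      rw [key, key, show j + i + m - 2 = i + j + m - 2 by ring] at h1
      exact tinj _ _ _ h1
    have hG : ∀ (a b c : A) (i j m : ℤ),
        (i * i - i) • Q1 l r a b c - (j * j - j) • Q1 l r b a c
          + (i * j) • Q2 l r a b c + (i * m) • Q3 l r a b c
          - (j * m) • Q3 l r b a c + (m - m * m) • Q4 l r a b c = 0 := by
      intro a b c i j m
      rw [← comb, sub_eq_zero]
      exact hbase a b c i j m
    have hQ1 : ∀ a b c : A, Q1 l r a b c = 0 := by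
      intro a b c
      have h1 := hG a b c 2 0 0
      norm_num at h1
      exact zsmul_cancel (k := k) two_ne_zero h1
    have hQ2 : ∀ a b c : A, Q2 l r a b c = 0 := by
      intro a b c
      have h1 := hG a b c 1 1 0
      norm_num at h1
      have h2 := hG a b c 1 0 0  -- gives nothing; instead use directly
      -- h1 : Q2 - (stuff)?  handled below
      exact h1
    have hQ4 : ∀ a b c : A, Q4 l r a b c = 0 := by
      intro a b c
      have h1 := hG a b c 0 0 2
      norm_num at h1
      exact zsmul_cancel (k := k) two_ne_zero h1
    have hQ3 : ∀ a b c : A, Q3 l r a b c = 0 := by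
      intro a b c
      have h1 := hG a b c 1 0 1
      norm_num at h1
      exact h1
    refine ⟨?_, ?_, ?_, ?_⟩
    · intro a b c
      have h1 := hQ2 a b c
      simp only [Q2] at h1
      simp only [map_add, LinearMap.add_apply]
      linear_combination (norm := module) -h1
    · intro a b c
      have h1 := hQ3 a c b
      simp only [Q3] at h1
      simp only [map_add, LinearMap.add_apply]
      linear_combination (norm := module) h1
    · intro a b c
      have h1 := hQ1 a b c
      simp only [Q1] at h1
      simp only [map_add, LinearMap.add_apply]
      linear_combination (norm := module) h1
    · intro a b c
      have h1 := hQ4 c b a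
      simp only [Q4] at h1
      linear_combination (norm := module) h1
  · -- pre-Novikov → pre-Lie
    intro hN
    obtain ⟨h1, h2, h3, h4⟩ := hN
    have hQ1 : ∀ a b c : A, Q1 l r a b c = 0 := by
      intro a b c
      have h := h3 a b c
      simp only [map_add, LinearMap.add_apply] at h
      simp only [Q1]
      linear_combination (norm := module) h
    have hQ2 : ∀ a b c : A, Q2 l r a b c = 0 := by
      intro a b c
      have h := h1 a b c
      simp only [map_add, LinearMap.add_apply] at h
      simp only [Q2]
      linear_combination (norm := module) -h
    have hQ3 : ∀ a b c : A, Q3 l r a b c = 0 := by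
      intro a b c
      have h := h2 a c b
      simp only [map_add, LinearMap.add_apply] at h
      simp only [Q3]
      linear_combination (norm := module) h
    have hQ4 : ∀ a b c : A, Q4 l r a b c = 0 := by
      intro a b c
      have h := h4 c b a
      simp only [Q4]
      linear_combination (norm := module) h
    have hbase : ∀ (a b c : A) (i j m : ℤ), Edef l r a b c i j m = Edef l r b a c j i m := by
      intro a b c i j m
      rw [← sub_eq_zero, comb, hQ1, hQ2, hQ3, hQ4, hQ1, hQ3]
      simp
    -- the pre-Lie identity on pure tensors of the form a ⊗ T n
    have hpure : ∀ (a b c : A) (i j m : ℤ),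
        op (op (a ⊗ₜ[k] T i) (b ⊗ₜ[k] T j)) (c ⊗ₜ[k] T m)
          - op (a ⊗ₜ[k] T i) (op (b ⊗ₜ[k] T j) (c ⊗ₜ[k] T m))
        = op (op (b ⊗ₜ[k] T j) (a ⊗ₜ[k] T i)) (c ⊗ₜ[k] T m)
          - op (b ⊗ₜ[k] T j) (op (a ⊗ₜ[k] T i) (c ⊗ₜ[k] T m)) := by
      intro a b c i j m
      rw [key, key, show j + i + m - 2 = i + j + m - 2 by ring, hbase a b c i j m]
    -- span argument
    set S : Set (A ⊗[k] LaurentPolynomial k) := {w | ∃ (a : A) (n : ℤ), w = a ⊗ₜ[k] T n}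
      with hS
    have hspan : ∀ u : A ⊗[k] LaurentPolynomial k, u ∈ Submodule.span k S := by
      intro u
      have htop : Submodule.span k S = ⊤ := by
        rw [eq_top_iff, ← TensorProduct.span_tmul_eq_top k A (LaurentPolynomial k),
          Submodule.span_le]
        rintro w ⟨a, p, rfl⟩
        induction p using LaurentPolynomial.induction_on' with
        | add p q hp hq =>
          rw [tmul_add]
          exact add_mem hp hq
        | C_mul_T n cc =>
          have hc : (LaurentPolynomial.C cc) * LaurentPolynomial.T n
              = cc • LaurentPolynomial.T n := by
            rw [← LaurentPolynomial.single_eq_C_mul_T, LaurentPolynomial.T,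
              AddMonoidAlgebra.smul_single' cc n 1, mul_one]
          rw [hc, tmul_smul]
          exact Submodule.smul_mem _ _ (Submodule.subset_span ⟨a, n, rfl⟩)
      rw [htop]; exact Submodule.mem_top
    intro x y z
    induction hspan x using Submodule.span_induction with
    | mem x hx =>
      induction hspan y using Submodule.span_induction with
      | mem y hy =>
        induction hspan z using Submodule.span_induction with
        | mem z hz =>
          obtain ⟨a, i, rfl⟩ := hx
          obtain ⟨b, j, rfl⟩ := hy
          obtain ⟨c, m, rfl⟩ := hz
          exact hpure a b c i j m
        | zero => simp
        | add z₁ z₂ _ _ ih1 ih2 =>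
          simp only [map_add, LinearMap.add_apply] at ih1 ih2 ⊢
          linear_combination (norm := module) ih1 + ih2
        | smul c z' _ ih =>
          simp only [map_smul, LinearMap.smul_apply] at ih ⊢
          linear_combination (norm := module) c • ih
      | zero => simp
      | add y₁ y₂ _ _ ih1 ih2 =>
        simp only [map_add, LinearMap.add_apply] at ih1 ih2 ⊢
        linear_combination (norm := module) ih1 + ih2
      | smul c y' _ ih =>
        simp only [map_smul, LinearMap.smul_apply] at ih ⊢
        linear_combination (norm := module) c • ih
    | zero => simp
    | add x₁ x₂ _ _ ih1 ih2 =>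
      simp only [map_add, LinearMap.add_apply] at ih1 ih2 ⊢
      linear_combination (norm := module) ih1 + ih2
    | smul c x' _ ih =>
      simp only [map_smul, LinearMap.smul_apply] at ih ⊢
      linear_combination (norm := module) c • ih
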